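/- With E_τ = max(V_A - C_0, V_B - C_τ) where C_τ = βV_τ if V_τ > αC_0 and C_τ = C_0 otherwise, the exceedance probability decomposes as P(E_τ > y) = 1 - P(V_A - C_0 ≤ y, V_τ ≤ αC_0)·P(V_B - C_0 ≤ y, V_τ ≤ αC_0)/P(V_τ ≤ αC_0) - P(V_A - C_0 ≤ y, V_τ > αC_0)·P(V_B - βV_τ ≤ y, V_τ > αC_0)/P(V_τ > αC_0). -/
import Mathlib

open MeasureTheory ProbabilityTheory Real Filter Set

/-- The complementary error function `erfc z = (2/√π) ∫_z^∞ e^{-u²} du`. -/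
noncomputable def erfc (z : ℝ) : ℝ := (2 / Real.sqrt Real.pi) * ∫ u in Set.Ioi z, Real.exp (-u ^ 2)

/-- `B` is a standard one-dimensional Brownian motion under `μ`. -/
structure IsBrownianMotion {Ω : Type*} [MeasurableSpace Ω] (μ : Measure Ω) (B : ℝ → Ω → ℝ) : Prop where
  init : ∀ᵐ ω ∂μ, B 0 ω = 0
  cont : ∀ᵐ ω ∂μ, Continuous fun t => B t ω
  meas : ∀ t, Measurable (B t)
  gauss : ∀ s t : ℝ, 0 ≤ s → s ≤ t →
    Measure.map (fun ω => B t ω - B s ω) μ = gaussianReal 0 (Real.toNNReal (t - s))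
  indep : ∀ s t u v : ℝ, 0 ≤ s → s ≤ t → t ≤ u → u ≤ v →
    IndepFun (fun ω => B t ω - B s ω) (fun ω => B v ω - B u ω) μ

lemma sup_Icc_le_iff' {f : ℝ → ℝ} (hf : Continuous f) {a b : ℝ} (hab : a < b) (c : ℝ) :
    (⨆ s : Set.Icc a b, f s) ≤ c ↔ ∀ q : ℚ, (q : ℝ) ∈ Set.Icc a b → f q ≤ c := by
  obtain ⟨x₀, hx₀, hmax⟩ :=
    (isCompact_Icc (a := a) (b := b)).exists_isMaxOn ⟨a, le_refl a, hab.le⟩ hf.continuousOn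
  haveI : Nonempty (Set.Icc a b) := ⟨⟨a, le_refl a, hab.le⟩⟩
  have hsup : (⨆ s : Set.Icc a b, f s) = f x₀ := by
    apply le_antisymm
    · exact ciSup_le fun s => hmax s.2
    · exact le_ciSup ⟨f x₀, by rintro _ ⟨s, rfl⟩; exact hmax s.2⟩ (⟨x₀, hx₀⟩ : Set.Icc a b)
  rw [hsup]
  constructor
  · intro h q hq; exact le_trans (hmax hq) h
  · intro h
    have hdense : Dense (Set.range ((↑) : ℚ → ℝ)) := Rat.denseRange_cast
    have hsub : Set.Icc a b ⊆ closure (Set.Icc a b ∩ Set.range ((↑) : ℚ → ℝ)) := by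
      have h1 : Set.Ioo a b ⊆ closure (Set.Ioo a b ∩ Set.range ((↑) : ℚ → ℝ)) :=
        hdense.open_subset_closure_inter isOpen_Ioo
      have h2 : closure (Set.Ioo a b ∩ Set.range ((↑) : ℚ → ℝ))
          ⊆ closure (Set.Icc a b ∩ Set.range ((↑) : ℚ → ℝ)) :=
        closure_mono (Set.inter_subset_inter_left _ Set.Ioo_subset_Icc_self)
      calc Set.Icc a b = closure (Set.Ioo a b) := (closure_Ioo hab.ne).symm
        _ ⊆ closure (closure (Set.Icc a b ∩ Set.range ((↑) : ℚ → ℝ))) :=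
            closure_mono (fun x hx => h2 (h1 hx))
        _ = _ := closure_closure
    have hcl : closure (Set.Icc a b ∩ Set.range ((↑) : ℚ → ℝ)) ⊆ {x | f x ≤ c} := by
      apply closure_minimal _ (isClosed_le hf continuous_const)
      rintro x ⟨hx, q, rfl⟩
      exact h q hx
    exact hcl (hsub hx₀)

/-- Equation 2.1: the exceedance probability of the maximum exposure `E_τ` decomposes over the
margin-call/no-margin-call scenarios, using the conditional independence (given each scenario) of
the pre- and post-MTM maxima. -/
theorem stmt8 {Ω : Type*} [MeasurableSpace Ω] (μ : Measure Ω) [IsProbabilityMeasure μ]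
    (B : ℝ → Ω → ℝ) (hB : IsBrownianMotion μ B)
    (σ V₀ : ℝ) (hσ : 0 < σ) (hV₀ : 0 ≤ V₀) (τ T : ℝ) (hτ : 0 < τ) (hτT : τ < T)
    (α β : ℝ) (hα : 0 < α) (hβ : 0 < β) (C₀ : ℝ) (hC₀ : C₀ = β * V₀)
    (V : ℝ → Ω → ℝ) (hV : ∀ s ω, V s ω = V₀ + σ * B s ω)
    (VA VB : Ω → ℝ)
    (hVA : ∀ ω, VA ω = ⨆ s : Set.Icc (0 : ℝ) τ, V s ω)
    (hVB : ∀ ω, VB ω = ⨆ s : Set.Icc τ T, V s ω)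
    (Cτ : Ω → ℝ) (hCτ : ∀ ω, Cτ ω = if V τ ω > α * C₀ then β * V τ ω else C₀)
    (Eτ : Ω → ℝ) (hEτ : ∀ ω, Eτ ω = max (VA ω - C₀) (VB ω - Cτ ω))
    (y : ℝ)
    -- conditional independence of the pre- and post-MTM maxima on each scenario:
    (hcond₁ : (μ {ω | VA ω - C₀ ≤ y ∧ VB ω - C₀ ≤ y ∧ V τ ω ≤ α * C₀}).toReal
        * (μ {ω | V τ ω ≤ α * C₀}).toReal
      = (μ {ω | VA ω - C₀ ≤ y ∧ V τ ω ≤ α * C₀}).toReal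
        * (μ {ω | VB ω - C₀ ≤ y ∧ V τ ω ≤ α * C₀}).toReal)
    (hcond₂ : (μ {ω | VA ω - C₀ ≤ y ∧ VB ω - β * V τ ω ≤ y ∧ V τ ω > α * C₀}).toReal
        * (μ {ω | V τ ω > α * C₀}).toReal
      = (μ {ω | VA ω - C₀ ≤ y ∧ V τ ω > α * C₀}).toReal
        * (μ {ω | VB ω - β * V τ ω ≤ y ∧ V τ ω > α * C₀}).toReal) :
    (μ {ω | Eτ ω > y}).toReal
      = 1 - (μ {ω | VA ω - C₀ ≤ y ∧ V τ ω ≤ α * C₀}).toReal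
              * (μ {ω | VB ω - C₀ ≤ y ∧ V τ ω ≤ α * C₀}).toReal
              / (μ {ω | V τ ω ≤ α * C₀}).toReal
          - (μ {ω | VA ω - C₀ ≤ y ∧ V τ ω > α * C₀}).toReal
              * (μ {ω | VB ω - β * V τ ω ≤ y ∧ V τ ω > α * C₀}).toReal
              / (μ {ω | V τ ω > α * C₀}).toReal := by
  classical
  -- measurability of V s
  have hVm : ∀ s : ℝ, Measurable (V s) := by
    intro s
    have : V s = fun ω => V₀ + σ * B s ω := funext (hV s)
    rw [this]
    exact measurable_const.add ((hB.meas s).const_mul σ)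
  -- a.e. continuity of paths of V
  have hae : ∀ᵐ ω ∂μ, Continuous fun t => V t ω := by
    filter_upwards [hB.cont] with ω h
    have : (fun t => V t ω) = fun t => V₀ + σ * B t ω := funext fun t => hV t ω
    rw [this]
    exact continuous_const.add (continuous_const.mul h)
  -- measurable surrogate sets
  set S₁ : Set Ω := {ω | V τ ω ≤ α * C₀} with hS₁def
  set A : Set Ω := ⋂ (q : ℚ) (_ : (q : ℝ) ∈ Set.Icc (0:ℝ) τ), {ω | V q ω ≤ y + C₀} with hAdef
  set B1 : Set Ω := ⋂ (q : ℚ) (_ : (q : ℝ) ∈ Set.Icc τ T), {ω | V q ω ≤ y + C₀} with hB1def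
  set B2 : Set Ω := ⋂ (q : ℚ) (_ : (q : ℝ) ∈ Set.Icc τ T), {ω | V q ω ≤ y + β * V τ ω}
    with hB2def
  have hS₁m : MeasurableSet S₁ := measurableSet_le (hVm τ) measurable_const
  have hAm : MeasurableSet A :=
    MeasurableSet.iInter fun q => MeasurableSet.iInter fun _ =>
      measurableSet_le (hVm q) measurable_const
  have hB1m : MeasurableSet B1 :=
    MeasurableSet.iInter fun q => MeasurableSet.iInter fun _ =>
      measurableSet_le (hVm q) measurable_const
  have hB2m : MeasurableSet B2 :=
    MeasurableSet.iInter fun q => MeasurableSet.iInter fun _ =>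
      measurableSet_le (hVm q) (measurable_const.add ((hVm τ).const_mul β))
  -- the complement scenario
  have hS₂eq : {ω | V τ ω > α * C₀} = S₁ᶜ := by
    ext ω; simp [hS₁def, not_le]
  -- pointwise characterizations on continuous paths
  have hptA : ∀ ω, Continuous (fun t => V t ω) → (VA ω - C₀ ≤ y ↔ ω ∈ A) := by
    intro ω h
    rw [sub_le_iff_le_add, hVA, sup_Icc_le_iff' h hτ]
    simp only [hAdef, Set.mem_iInter, Set.mem_setOf_eq]
  have hptB1 : ∀ ω, Continuous (fun t => V t ω) → (VB ω - C₀ ≤ y ↔ ω ∈ B1) := by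
    intro ω h
    rw [sub_le_iff_le_add, hVB, sup_Icc_le_iff' h hτT]
    simp only [hB1def, Set.mem_iInter, Set.mem_setOf_eq]
  have hptB2 : ∀ ω, Continuous (fun t => V t ω) → (VB ω - β * V τ ω ≤ y ↔ ω ∈ B2) := by
    intro ω h
    rw [sub_le_iff_le_add, hVB, sup_Icc_le_iff' h hτT]
    simp only [hB2def, Set.mem_iInter, Set.mem_setOf_eq]
  -- translate the measures of all sets
  have hμA₁ : μ {ω | VA ω - C₀ ≤ y ∧ V τ ω ≤ α * C₀} = μ (A ∩ S₁) := by
    apply measure_congr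
    rw [Filter.eventuallyEq_set]
    filter_upwards [hae] with ω h
    simp only [Set.mem_setOf_eq, Set.mem_inter_iff]
    exact and_congr (hptA ω h) Iff.rfl
  have hμB₁ : μ {ω | VB ω - C₀ ≤ y ∧ V τ ω ≤ α * C₀} = μ (B1 ∩ S₁) := by
    apply measure_congr
    rw [Filter.eventuallyEq_set]
    filter_upwards [hae] with ω h
    simp only [Set.mem_setOf_eq, Set.mem_inter_iff]
    exact and_congr (hptB1 ω h) Iff.rfl
  have hμA₂ : μ {ω | VA ω - C₀ ≤ y ∧ V τ ω > α * C₀} = μ (A ∩ S₁ᶜ) := by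
    apply measure_congr
    rw [Filter.eventuallyEq_set]
    filter_upwards [hae] with ω h
    simp only [Set.mem_setOf_eq, Set.mem_inter_iff, Set.mem_compl_iff, hS₁def, not_le]
    exact and_congr (hptA ω h) Iff.rfl
  have hμB₂ : μ {ω | VB ω - β * V τ ω ≤ y ∧ V τ ω > α * C₀} = μ (B2 ∩ S₁ᶜ) := by
    apply measure_congr
    rw [Filter.eventuallyEq_set]
    filter_upwards [hae] with ω h
    simp only [Set.mem_setOf_eq, Set.mem_inter_iff, Set.mem_compl_iff, hS₁def, not_le]
    exact and_congr (hptB2 ω h) Iff.rfl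
  have hμM₁ : μ {ω | VA ω - C₀ ≤ y ∧ VB ω - C₀ ≤ y ∧ V τ ω ≤ α * C₀}
      = μ (A ∩ B1 ∩ S₁) := by
    apply measure_congr
    rw [Filter.eventuallyEq_set]
    filter_upwards [hae] with ω h
    simp only [Set.mem_setOf_eq, Set.mem_inter_iff]
    rw [hptA ω h, hptB1 ω h]
    tauto
  have hμM₂ : μ {ω | VA ω - C₀ ≤ y ∧ VB ω - β * V τ ω ≤ y ∧ V τ ω > α * C₀}
      = μ (A ∩ B2 ∩ S₁ᶜ) := by
    apply measure_congr
    rw [Filter.eventuallyEq_set]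
    filter_upwards [hae] with ω h
    simp only [Set.mem_setOf_eq, Set.mem_inter_iff, Set.mem_compl_iff, hS₁def, not_le]
    rw [hptA ω h, hptB2 ω h]
    tauto
  have hμS : μ {ω | V τ ω ≤ α * C₀} = μ S₁ := rfl
  have hμS' : μ {ω | V τ ω > α * C₀} = μ S₁ᶜ := by rw [hS₂eq]
  -- the exceedance set
  set M : Set Ω := (A ∩ B1 ∩ S₁) ∪ (A ∩ B2 ∩ S₁ᶜ) with hMdef
  have hMm : MeasurableSet M :=
    (((hAm.inter hB1m).inter hS₁m).union ((hAm.inter hB2m).inter hS₁m.compl))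
  have hμE : μ {ω | Eτ ω > y} = μ Mᶜ := by
    apply measure_congr
    rw [Filter.eventuallyEq_set]
    filter_upwards [hae] with ω h
    simp only [Set.mem_setOf_eq, Set.mem_compl_iff, hMdef, Set.mem_union, Set.mem_inter_iff,
      Set.mem_compl_iff]
    rw [gt_iff_lt, ← not_le]
    apply not_congr
    rw [hEτ, max_le_iff]
    by_cases hs : ω ∈ S₁
    · have hc : Cτ ω = C₀ := by
        rw [hCτ, if_neg (not_lt.2 hs)]
      rw [hc, hptA ω h, hptB1 ω h]
      have hs' : ¬ ω ∈ S₁ᶜ := fun hh => hh hs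
      tauto
    · have hlt : V τ ω > α * C₀ := not_le.1 hs
      have hc : Cτ ω = β * V τ ω := by rw [hCτ, if_pos hlt]
      rw [hc, hptA ω h, hptB2 ω h]
      have hs' : ω ∈ S₁ᶜ := hs
      tauto
  -- split M
  have hdisj : Disjoint (A ∩ B1 ∩ S₁) (A ∩ B2 ∩ S₁ᶜ) := by
    apply Set.disjoint_left.2
    rintro ω ⟨-, hω⟩ ⟨-, hω'⟩
    exact hω' hω
  have hμM : μ M = μ (A ∩ B1 ∩ S₁) + μ (A ∩ B2 ∩ S₁ᶜ) :=
    measure_union hdisj ((hAm.inter hB2m).inter hS₁m.compl)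
  -- pass to reals
  have hfin : ∀ s : Set Ω, μ s ≠ ⊤ := fun s => measure_ne_top μ s
  have hcompl : (μ Mᶜ).toReal = 1 - (μ M).toReal := by
    rw [measure_compl hMm (hfin M), measure_univ,
      ENNReal.toReal_sub_of_le prob_le_one ENNReal.one_ne_top, ENNReal.toReal_one]
  rw [hμE, hcompl, hμA₁, hμB₁, hμA₂, hμB₂, hμS, hμS', hμM, ENNReal.toReal_add (hfin _) (hfin _)]
  -- rewrite the conditional independence hypotheses
  rw [hμM₁, hμA₁, hμB₁, hμS] at hcond₁
  rw [hμM₂, hμA₂, hμB₂, hμS'] at hcond₂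
  have h₁ : (μ (A ∩ B1 ∩ S₁)).toReal
      = (μ (A ∩ S₁)).toReal * (μ (B1 ∩ S₁)).toReal / (μ S₁).toReal := by
    by_cases hs : (μ S₁).toReal = 0
    · have hz : μ S₁ = 0 := by
        rcases (ENNReal.toReal_eq_zero_iff _).1 hs with h | h
        · exact h
        · exact absurd h (hfin S₁)
      have h1 : μ (A ∩ B1 ∩ S₁) = 0 :=
        measure_mono_null Set.inter_subset_right hz
      have h2 : μ (A ∩ S₁) = 0 := measure_mono_null Set.inter_subset_right hz
      rw [h1, h2]; simp
    · field_simp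
      linarith [hcond₁]
  have h₂ : (μ (A ∩ B2 ∩ S₁ᶜ)).toReal
      = (μ (A ∩ S₁ᶜ)).toReal * (μ (B2 ∩ S₁ᶜ)).toReal / (μ S₁ᶜ).toReal := by
    by_cases hs : (μ S₁ᶜ).toReal = 0
    · have hz : μ S₁ᶜ = 0 := by
        rcases (ENNReal.toReal_eq_zero_iff _).1 hs with h | h
        · exact h
        · exact absurd h (hfin _)
      have h1 : μ (A ∩ B2 ∩ S₁ᶜ) = 0 :=
        measure_mono_null Set.inter_subset_right hz
      have h2 : μ (A ∩ S₁ᶜ) = 0 := measure_mono_null Set.inter_subset_right hz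
      rw [h1, h2]; simp
    · field_simp
      linarith [hcond₂]
  rw [h₁, h₂]
  ring
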